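/- Let Ω₁ = B((-1,0,0);2), Ω₂ = B((1,0,0);2) ⊂ ℝ³, δᵢ(x) = max{0, 2 - ‖x - mᵢ‖} with m₁=(-1,0,0), m₂=(1,0,0), and θ₁ = δ₁/(δ₁+δ₂) on Ω₁ ∪ Ω₂. Let x ∈ S = {(0,x₂,x₃) : x₂²+x₃²=3}. Then θ₁ has no continuous extension to x: there exist sequences (xₙ) ⊂ Ω₁\closure(Ω₂) and (yₙ) ⊂ Ω₁∩Ω₂ both converging to x such that θ₁(xₙ) → 1 while limsup θ₁(yₙ) ≤ 1/2. -/

import Mathlib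

open Metric Set Filter Topology

noncomputable abbrev E3 := EuclideanSpace ℝ (Fin 3)

noncomputable def m1 : E3 := (WithLp.equiv 2 (Fin 3 → ℝ)).symm ![(-1 : ℝ), 0, 0]
noncomputable def m2 : E3 := (WithLp.equiv 2 (Fin 3 → ℝ)).symm ![(1 : ℝ), 0, 0]

noncomputable def del (m x : E3) : ℝ := max 0 (2 - ‖x - m‖)

noncomputable def theta1 (x : E3) : ℝ := del m1 x / (del m1 x + del m2 x)

lemma m1_app : m1 0 = -1 ∧ m1 1 = 0 ∧ m1 2 = 0 := by
  refine ⟨?_, ?_, ?_⟩ <;> simp [m1, WithLp.equiv_symm_apply, PiLp.toLp_apply]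

lemma m2_app : m2 0 = 1 ∧ m2 1 = 0 ∧ m2 2 = 0 := by
  refine ⟨?_, ?_, ?_⟩ <;> simp [m2, WithLp.equiv_symm_apply, PiLp.toLp_apply]

lemma normsq (y : E3) : ‖y‖^2 = y 0^2 + y 1^2 + y 2^2 := by
  rw [EuclideanSpace.norm_eq, Real.sq_sqrt (by positivity)]
  simp [Fin.sum_univ_three, sq_abs]

lemma aux_a (x : E3) (hx0 : x 0 = 0) (hx12 : x 1 ^ 2 + x 2 ^ 2 = 3)
    (t : ℝ) (ht0 : 0 < t) (ht1 : t ≤ 1) :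
    (x - t • EuclideanSpace.single 0 1) ∈ ball m1 2 \ closure (ball m2 2) ∧
    theta1 (x - t • EuclideanSpace.single 0 1) = 1 := by
  obtain ⟨h10, h11, h12⟩ := m1_app
  obtain ⟨h20, h21, h22⟩ := m2_app
  set y : E3 := x - t • EuclideanSpace.single 0 1 with hy
  have ha0 : y 0 = -t := by simp [hy, EuclideanSpace.single_apply, hx0]
  have ha1 : y 1 = x 1 := by simp [hy, EuclideanSpace.single_apply]
  have ha2 : y 2 = x 2 := by simp [hy, EuclideanSpace.single_apply]
  have hn1 : ‖y - m1‖ ^ 2 = (1 - t) ^ 2 + 3 := by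
    rw [normsq]; simp only [PiLp.sub_apply, ha0, ha1, ha2, h10, h11, h12]
    nlinarith [hx12]
  have hn2 : ‖y - m2‖ ^ 2 = (1 + t) ^ 2 + 3 := by
    rw [normsq]; simp only [PiLp.sub_apply, ha0, ha1, ha2, h20, h21, h22]
    nlinarith [hx12]
  have hlt : ‖y - m1‖ < 2 := by nlinarith [norm_nonneg (y - m1)]
  have hge : 2 ≤ ‖y - m2‖ := by nlinarith [norm_nonneg (y - m2)]
  have hd2 : del m2 y = 0 := max_eq_left (by linarith)
  have hd1 : 0 < del m1 y := lt_max_of_lt_right (by linarith)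
  refine ⟨⟨mem_ball_iff_norm.2 hlt, ?_⟩, ?_⟩
  · rw [closure_ball m2 (by norm_num)]
    intro h
    rw [mem_closedBall_iff_norm] at h
    nlinarith [norm_nonneg (y - m2)]
  · rw [theta1, hd2, add_zero, div_self (ne_of_gt hd1)]

lemma aux_b (x : E3) (hx0 : x 0 = 0) (hx12 : x 1 ^ 2 + x 2 ^ 2 = 3)
    (t : ℝ) (ht0 : 0 < t) (ht1 : t ≤ 1) :
    ((1 - t) • x) ∈ ball m1 2 ∩ ball m2 2 ∧ theta1 ((1 - t) • x) = 1 / 2 := by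
  obtain ⟨h10, h11, h12⟩ := m1_app
  obtain ⟨h20, h21, h22⟩ := m2_app
  set y : E3 := (1 - t) • x with hy
  have hb1 : ‖y - m1‖ ^ 2 = 1 + 3 * (1 - t) ^ 2 := by
    rw [normsq]
    simp only [hy, PiLp.sub_apply, PiLp.smul_apply, smul_eq_mul, h10, h11, h12, hx0]
    nlinarith [hx12]
  have hb2 : ‖y - m2‖ ^ 2 = 1 + 3 * (1 - t) ^ 2 := by
    rw [normsq]
    simp only [hy, PiLp.sub_apply, PiLp.smul_apply, smul_eq_mul, h20, h21, h22, hx0]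
    nlinarith [hx12]
  have ht : (1 - t) ^ 2 < 1 := by nlinarith
  have hlt1 : ‖y - m1‖ < 2 := by nlinarith [norm_nonneg (y - m1)]
  have hlt2 : ‖y - m2‖ < 2 := by nlinarith [norm_nonneg (y - m2)]
  have heq : ‖y - m1‖ = ‖y - m2‖ := by
    nlinarith [norm_nonneg (y - m1), norm_nonneg (y - m2)]
  have hd1 : 0 < del m1 y := lt_max_of_lt_right (by linarith)
  have hdeq : del m2 y = del m1 y := by rw [del, del, heq]
  refine ⟨⟨mem_ball_iff_norm.2 hlt1, mem_ball_iff_norm.2 hlt2⟩, ?_⟩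
  rw [theta1, hdeq, div_eq_iff (by linarith)]; ring

theorem stmt_1 (x : E3) (hx : x 0 = 0 ∧ (x 1) ^ 2 + (x 2) ^ 2 = 3) :
    ∃ a b : ℕ → E3,
      (∀ n, a n ∈ ball m1 2 \ closure (ball m2 2)) ∧
      (∀ n, b n ∈ ball m1 2 ∩ ball m2 2) ∧
      Tendsto a atTop (𝓝 x) ∧ Tendsto b atTop (𝓝 x) ∧
      Tendsto (fun n => theta1 (a n)) atTop (𝓝 1) ∧
      Filter.limsup (fun n => theta1 (b n)) atTop ≤ 1 / 2 := by
  obtain ⟨hx0, hx12⟩ := hx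
  have hεpos : ∀ n : ℕ, (0:ℝ) < 1 / (n + 1) := fun n => by positivity
  have hεle : ∀ n : ℕ, (1:ℝ) / (n + 1) ≤ 1 := fun n => by
    rw [div_le_one (by positivity)]; linarith [Nat.cast_nonneg (α := ℝ) n]
  have hεlim : Tendsto (fun n : ℕ => (1:ℝ) / (n + 1)) atTop (𝓝 0) :=
    tendsto_one_div_add_atTop_nhds_zero_nat
  refine ⟨fun n => x - (1 / (n + 1) : ℝ) • EuclideanSpace.single 0 1,
    fun n => (1 - 1 / (n + 1) : ℝ) • x,
    fun n => (aux_a x hx0 hx12 _ (hεpos n) (hεle n)).1,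
    fun n => (aux_b x hx0 hx12 _ (hεpos n) (hεle n)).1, ?_, ?_, ?_, ?_⟩
  · have h2 := (tendsto_const_nhds : Tendsto (fun _ : ℕ => x) atTop (𝓝 x)).sub
      (hεlim.smul_const (EuclideanSpace.single 0 1 : E3))
    simpa using h2
  · have h2 := ((tendsto_const_nhds : Tendsto (fun _ : ℕ => (1:ℝ)) atTop (𝓝 1)).sub
      hεlim).smul_const x
    simpa using h2
  · have h : ∀ n : ℕ, theta1 (x - (1 / (n + 1) : ℝ) • EuclideanSpace.single 0 1) = 1 :=
      fun n => (aux_a x hx0 hx12 _ (hεpos n) (hεle n)).2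
    simp_rw [h]; exact tendsto_const_nhds
  · have h : ∀ n : ℕ, theta1 ((1 - 1 / (n + 1) : ℝ) • x) = 1 / 2 :=
      fun n => (aux_b x hx0 hx12 _ (hεpos n) (hεle n)).2
    simp_rw [h]; simp [Filter.limsup_const]
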